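/- For every real y ≥ 4 and every real x with 0 < x ≤ 1/2, the expression (π²/8)·y²/cosh²(πy/2) + (π²/8)·y²/sinh²(πy/2) + (π/(4y))·tanh(πy/2) + 1/y² + (π²/(8y cosh²(πy/2)))·(3/(2y) + (π/2)tanh(πy/2)) is strictly less than 1/2 (indeed less than 0.2594088). -/
import Mathlib


open Real Finset

set_option maxHeartbeats 1000000

private lemma auxA1 {P Y E2 C2 : ℝ} (hP : P ≤ 9.8696073) (hY : 0 ≤ Y)
    (h1 : Y * 286700 ≤ 16 * E2) (h2 : E2 / 4 ≤ C2) : P / 8 * Y ≤ 0.0002754 * C2 := by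
  nlinarith [mul_nonneg (sub_nonneg.mpr hP) hY]

private lemma auxA2 {P Y E2 S2 : ℝ} (hP : P ≤ 9.8696073) (hY : 0 ≤ Y)
    (h1 : Y * 286700 ≤ 16 * E2) (h2 : E2 * 0.2499982 ≤ S2) : P / 8 * Y ≤ 0.00027541 * S2 := by
  nlinarith [mul_nonneg (sub_nonneg.mpr hP) hY]

private lemma auxA5 {P Y C2 : ℝ} (hP : P ≤ 9.8696073) (hY : 4 ≤ Y)
    (hC : 71675 ≤ C2) : P ≤ 0.0000043033 * (8 * Y * C2) := by
  nlinarith [mul_le_mul hY hC (by norm_num) (by linarith)]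

private lemma auxEi' {E Ei : ℝ} (hE : 0 < E) (hEi : 0 < Ei) (hEEi : E * Ei = 1)
    (h286 : (286700:ℝ) ≤ E ^ 2) : 286700 * Ei ≤ E := by
  have h2 : E * (E * Ei) = E := by rw [hEEi, mul_one]
  nlinarith [mul_nonneg hEi.le (sub_nonneg.mpr h286)]

private lemma auxS {E Ei : ℝ} (hE : 0 < E) (hEi : 0 < Ei)
    (h : 286700 * Ei ≤ E) : E ^ 2 * 0.2499982 ≤ ((E - Ei) / 2) ^ 2 := by
  nlinarith [mul_le_mul_of_nonneg_left h hE.le, sq_nonneg Ei]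

private lemma auxT {E Ei : ℝ} (hEi : 0 < Ei) (hEEi : E * Ei = 1) (h2 : Ei ^ 2 ≤ 1) :
    (E - Ei) / 2 ≤ (1 - Ei ^ 2) * ((E + Ei) / 2) := by
  have h3 : Ei * (E * Ei) = Ei := by rw [hEEi, mul_one]
  nlinarith [mul_nonneg hEi.le (sub_nonneg.mpr h2)]

private lemma auxC {E Ei : ℝ} (hEEi : E * Ei = 1) (hEi : 0 ≤ Ei) :
    E ^ 2 / 4 ≤ ((E + Ei) / 2) ^ 2 := by
  nlinarith [sq_nonneg Ei]

lemma exp_4pi_lb : (286700:ℝ) ≤ Real.exp (4 * π) := by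
  have h1 : Real.exp (16 * (0.785398:ℝ)) ≤ Real.exp (4 * π) := by
    apply Real.exp_le_exp.mpr
    nlinarith [Real.pi_gt_d6]
  have h2 : Real.exp ((16:ℕ) * (0.785398:ℝ)) = Real.exp 0.785398 ^ 16 :=
    Real.exp_nat_mul _ 16
  have h3 : (∑ i ∈ range 10, (0.785398:ℝ) ^ i / i.factorial) ≤ Real.exp 0.785398 :=
    Real.sum_le_exp_of_nonneg (by norm_num) 10
  have h4 : (2.1932796:ℝ) ≤ ∑ i ∈ range 10, (0.785398:ℝ) ^ i / i.factorial := by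
    norm_num [Finset.sum_range_succ, Nat.factorial]
  have h5 : (2.1932796:ℝ) ^ 16 ≤ Real.exp 0.785398 ^ 16 :=
    pow_le_pow_left₀ (by norm_num) (le_trans h4 h3) 16
  have h6 : (286700:ℝ) ≤ (2.1932796:ℝ)^16 := by norm_num
  push_cast at h2
  nlinarith [h5, h6, h1, h2]

lemma exp_4pi_ub : Real.exp (4.01 * π) ≤ 296200 := by
  have h1 : Real.exp (4.01 * π) ≤ Real.exp (16 * (0.78736175:ℝ)) := by
    apply Real.exp_le_exp.mpr
    nlinarith [Real.pi_lt_d6]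
  have h2 : Real.exp ((16:ℕ) * (0.78736175:ℝ)) = Real.exp 0.78736175 ^ 16 :=
    Real.exp_nat_mul _ 16
  have h3 : Real.exp (0.78736175:ℝ) ≤ (∑ i ∈ range 10, (0.78736175:ℝ) ^ i / i.factorial)
      + (0.78736175:ℝ)^10 * (10+1) / ((10:ℕ).factorial * 10) := by
    exact_mod_cast Real.exp_bound' (by norm_num) (by norm_num) (by norm_num)
  have h4 : (∑ i ∈ range 10, (0.78736175:ℝ) ^ i / i.factorial)
      + (0.78736175:ℝ)^10 * (10+1) / ((10:ℕ).factorial * 10) ≤ 2.1975910 := by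
    norm_num [Finset.sum_range_succ, Nat.factorial]
  have h5 : Real.exp 0.78736175 ^ 16 ≤ (2.1975910:ℝ) ^ 16 :=
    pow_le_pow_left₀ (Real.exp_nonneg _) (le_trans h3 h4) 16
  have h6 : (2.1975910:ℝ)^16 ≤ 296200 := by norm_num
  push_cast at h2
  nlinarith [h5, h6, h1, h2]

theorem hyperbolic_bound (y x : ℝ) (hy : 4 ≤ y) (hx0 : 0 < x) (hx : x ≤ 1 / 2) :
    (π ^ 2 / 8) * y ^ 2 / Real.cosh (π * y / 2) ^ 2 +
        (π ^ 2 / 8) * y ^ 2 / Real.sinh (π * y / 2) ^ 2 +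
        (π / (4 * y)) * Real.tanh (π * y / 2) + 1 / y ^ 2 +
        (π ^ 2 / (8 * y * Real.cosh (π * y / 2) ^ 2)) *
          (3 / (2 * y) + (π / 2) * Real.tanh (π * y / 2)) < 0.2594088 ∧
    (π ^ 2 / 8) * y ^ 2 / Real.cosh (π * y / 2) ^ 2 +
        (π ^ 2 / 8) * y ^ 2 / Real.sinh (π * y / 2) ^ 2 +
        (π / (4 * y)) * Real.tanh (π * y / 2) + 1 / y ^ 2 +
        (π ^ 2 / (8 * y * Real.cosh (π * y / 2) ^ 2)) *
          (3 / (2 * y) + (π / 2) * Real.tanh (π * y / 2)) < 1 / 2 := by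
  have hπl : 3.141592 < π := Real.pi_gt_d6
  have hπu : π < 3.141593 := Real.pi_lt_d6
  have hy0 : (0:ℝ) < y := by linarith
  obtain ⟨E, hE_def⟩ : ∃ E, E = Real.exp (π * y / 2) := ⟨_, rfl⟩
  obtain ⟨Ei, hEi_def⟩ : ∃ Ei, Ei = Real.exp (-(π * y / 2)) := ⟨_, rfl⟩
  have hEpos : 0 < E := by rw [hE_def]; exact Real.exp_pos _
  have hEipos : 0 < Ei := by rw [hEi_def]; exact Real.exp_pos _
  have hEEi : E * Ei = 1 := by
    rw [hE_def, hEi_def, ← Real.exp_add]; simp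
  have hEsq : E ^ 2 = Real.exp (π * y) := by
    rw [hE_def, sq, ← Real.exp_add]; ring_nf
  have h286 : (286700:ℝ) ≤ E ^ 2 := by
    rw [hEsq]
    refine le_trans exp_4pi_lb (Real.exp_le_exp.mpr ?_)
    linarith [mul_nonneg (by linarith : (0:ℝ) ≤ π) (by linarith : (0:ℝ) ≤ y - 4)]
  have hE1 : (535:ℝ) ≤ E := by nlinarith [h286, hEpos]
  have hEi1 : Ei ≤ 1 := by
    linarith [mul_nonneg hEipos.le (sub_nonneg.mpr hE1), hEEi]
  have hc : Real.cosh (π * y / 2) = (E + Ei) / 2 := by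
    rw [hE_def, hEi_def]; exact Real.cosh_eq _
  have hs : Real.sinh (π * y / 2) = (E - Ei) / 2 := by
    rw [hE_def, hEi_def]; exact Real.sinh_eq _
  have hcpos : 0 < Real.cosh (π * y / 2) := Real.cosh_pos _
  have hspos : 0 < Real.sinh (π * y / 2) := by rw [hs]; linarith
  have hEi2le : Ei ^ 2 ≤ 1 := by
    linarith [mul_le_mul hEi1 hEi1 hEipos.le zero_le_one]
  have htanh_ub : Real.tanh (π * y / 2) ≤ 1 - Ei ^ 2 := by
    rw [Real.tanh_eq_sinh_div_cosh, hs, hc,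
      div_le_iff₀ (by rw [hc] at hcpos; exact hcpos)]
    exact auxT hEipos hEEi hEi2le
  have htanh0 : 0 ≤ Real.tanh (π * y / 2) := by
    rw [Real.tanh_eq_sinh_div_cosh]; positivity
  have htanh1 : Real.tanh (π * y / 2) ≤ 1 := by linarith [sq_nonneg Ei]
  -- y^2 * 286700 ≤ 16 E^2
  have e1 : y / 4 ≤ Real.exp ((y - 4) / 2) := by
    have := Real.add_one_le_exp ((y - 4) / 2); linarith
  have e2 : (y / 4) ^ 2 ≤ Real.exp ((y - 4) / 2) ^ 2 :=
    pow_le_pow_left₀ (by linarith) e1 2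
  have e3 : Real.exp ((y - 4) / 2) ^ 2 = Real.exp (y - 4) := by
    rw [sq, ← Real.exp_add]; ring_nf
  have e4 : Real.exp (y - 4) ≤ Real.exp (π * (y - 4)) := by
    apply Real.exp_le_exp.mpr
    linarith [mul_nonneg (by linarith : (0:ℝ) ≤ π - 1) (by linarith : (0:ℝ) ≤ y - 4)]
  have e5 : Real.exp (π * (y - 4)) * Real.exp (4 * π) = Real.exp (π * y) := by
    rw [← Real.exp_add]; ring_nf
  have e6 : y ^ 2 ≤ 16 * Real.exp (π * (y - 4)) := by
    have h : (y / 4) ^ 2 ≤ Real.exp (π * (y - 4)) := by rw [e3] at e2; linarith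
    linarith [h]
  have hyE : y ^ 2 * 286700 ≤ 16 * E ^ 2 := by
    have e7 : y ^ 2 * Real.exp (4 * π) ≤ 16 * Real.exp (π * (y - 4)) * Real.exp (4 * π) :=
      mul_le_mul_of_nonneg_right e6 (Real.exp_nonneg _)
    have e8 : y ^ 2 * 286700 ≤ y ^ 2 * Real.exp (4 * π) :=
      mul_le_mul_of_nonneg_left exp_4pi_lb (sq_nonneg y)
    rw [hEsq]
    calc y ^ 2 * 286700 ≤ y ^ 2 * Real.exp (4 * π) := e8
      _ ≤ 16 * Real.exp (π * (y - 4)) * Real.exp (4 * π) := e7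
      _ = 16 * Real.exp (π * y) := by rw [mul_assoc, e5]
  have hc2 : E ^ 2 / 4 ≤ Real.cosh (π * y / 2) ^ 2 := by
    rw [hc]; exact auxC hEEi hEipos.le
  have hs2 : E ^ 2 * 0.2499982 ≤ Real.sinh (π * y / 2) ^ 2 := by
    rw [hs]; exact auxS hEpos hEipos (auxEi' hEpos hEipos hEEi h286)
  have hπsq : π ^ 2 ≤ 9.8696073 := by
    nlinarith [mul_le_mul hπu.le hπu.le (by linarith : (0:ℝ) ≤ π)
      (by norm_num : (0:ℝ) ≤ (3.141593:ℝ))]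
  -- Term 1
  have HT1 : (π ^ 2 / 8) * y ^ 2 / Real.cosh (π * y / 2) ^ 2 ≤ 0.0002754 := by
    rw [div_le_iff₀ (by positivity)]
    calc (π ^ 2 / 8) * y ^ 2 = π ^ 2 / 8 * y ^ 2 := by ring
      _ ≤ 0.0002754 * Real.cosh (π * y / 2) ^ 2 := auxA1 hπsq (sq_nonneg y) hyE hc2
  -- Term 2
  have HT2 : (π ^ 2 / 8) * y ^ 2 / Real.sinh (π * y / 2) ^ 2 ≤ 0.00027541 := by
    rw [div_le_iff₀ (by positivity)]
    calc (π ^ 2 / 8) * y ^ 2 = π ^ 2 / 8 * y ^ 2 := by ring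
      _ ≤ 0.00027541 * Real.sinh (π * y / 2) ^ 2 := auxA2 hπsq (sq_nonneg y) hyE hs2
  -- Term 5
  have HT5 : (π ^ 2 / (8 * y * Real.cosh (π * y / 2) ^ 2)) *
      (3 / (2 * y) + (π / 2) * Real.tanh (π * y / 2)) ≤ 0.0000083734 := by
    have hcc : (71675:ℝ) ≤ Real.cosh (π * y / 2) ^ 2 := by linarith
    have hA : π ^ 2 / (8 * y * Real.cosh (π * y / 2) ^ 2) ≤ 0.0000043033 := by
      rw [div_le_iff₀ (by positivity)]
      exact auxA5 hπsq hy hcc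
    have hB : 3 / (2 * y) + (π / 2) * Real.tanh (π * y / 2) ≤ 1.9457965 := by
      have hb1 : 3 / (2 * y) ≤ 3 / 8 := by
        rw [div_le_div_iff₀ (by linarith) (by norm_num)]; linarith
      have hb2 : (π / 2) * Real.tanh (π * y / 2) ≤ π / 2 := by
        linarith [mul_nonneg (by linarith : (0:ℝ) ≤ π / 2) (sub_nonneg.mpr htanh1)]
      linarith
    calc (π ^ 2 / (8 * y * Real.cosh (π * y / 2) ^ 2)) *
        (3 / (2 * y) + (π / 2) * Real.tanh (π * y / 2))
        ≤ 0.0000043033 * 1.9457965 := by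
          apply mul_le_mul hA hB _ (by norm_num)
          positivity
      _ ≤ 0.0000083734 := by norm_num
  -- Terms 3 + 4
  have HT34 : (π / (4 * y)) * Real.tanh (π * y / 2) + 1 / y ^ 2 ≤ 0.25884891 := by
    rcases le_or_gt y 4.01 with hc41 | hc41
    · have hB296 : E ^ 2 ≤ 296200 := by
        rw [hEsq]
        refine le_trans (Real.exp_le_exp.mpr ?_) exp_4pi_ub
        linarith [mul_nonneg (by linarith : (0:ℝ) ≤ π) (by linarith : (0:ℝ) ≤ 4.01 - y)]
      have hsq1 : E ^ 2 * Ei ^ 2 = 1 := by rw [← mul_pow, hEEi, one_pow]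
      have hEi2 : 1 / 296200 ≤ Ei ^ 2 := by
        rw [div_le_iff₀ (by norm_num)]
        linarith [mul_nonneg (sq_nonneg Ei) (sub_nonneg.mpr hB296), hsq1]
      have hlo : (0.1958598:ℝ) ≤ π / (4 * y) := by
        rw [le_div_iff₀ (by linarith)]; linarith
      have hhi : π / (4 * y) ≤ 3.141593 / 16 := by
        rw [div_le_div_iff₀ (by linarith) (by norm_num)]; linarith
      have h1 : (π / (4 * y)) * Real.tanh (π * y / 2) ≤ (π / (4 * y)) * (1 - Ei ^ 2) :=
        mul_le_mul_of_nonneg_left htanh_ub (by positivity)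
      have h3 : (π / (4 * y)) * (1 - Ei ^ 2) = π / (4 * y) - (π / (4 * y)) * Ei ^ 2 := by
        ring
      rw [h3] at h1
      have h2 : (0.1958598:ℝ) * (1 / 296200) ≤ (π / (4 * y)) * Ei ^ 2 :=
        mul_le_mul hlo hEi2 (by norm_num) (by positivity)
      have h4 : 1 / y ^ 2 ≤ 1 / 16 := by
        rw [div_le_div_iff₀ (by positivity) (by norm_num)]
        linarith [sq_nonneg (y - 4)]
      linarith
    · have hhi : π / (4 * y) ≤ 3.141593 / 16.04 := by
        rw [div_le_div_iff₀ (by linarith) (by norm_num)]; linarith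
      have h1 : (π / (4 * y)) * Real.tanh (π * y / 2) ≤ π / (4 * y) := by
        calc (π / (4 * y)) * Real.tanh (π * y / 2) ≤ (π / (4 * y)) * 1 :=
              mul_le_mul_of_nonneg_left htanh1 (by positivity)
          _ = π / (4 * y) := mul_one _
      have h4 : 1 / y ^ 2 ≤ 1 / 16.0801 := by
        rw [div_le_div_iff₀ (by positivity) (by norm_num)]
        linarith [sq_nonneg (y - 4.01)]
      have h5 : (3.141593:ℝ) / 16.04 ≤ 0.19585992 := by norm_num
      have h6 : (1:ℝ) / 16.0801 ≤ 0.06218867 := by norm_num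
      linarith
  constructor
  · linarith
  · linarith
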